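/- In EP′(ℂ), for every z ∈ ℂ∖{0,1} and all p,q,p′,q′,s ∈ ℤ the following hold: (i) [z;p,q] − [z;p,q′] = [z;p,q−1] − [z;p,q′−1]; (ii) [z;p,q] − [z;p′,q] = [z;p−1,q] − [z;p′−1,q]; (iii) [z;p,q] − [z;p+s,q−s] = [z;p+1,q−1] − [z;p+s+1,q−s−1]. -/

import Mathlib

/-!
Formalization of a statement from "Extended Bloch group and the
Cheeger–Chern–Simons class" by W. D. Neumann.
-/

noncomputable section
open scoped Classical
open Complex

namespace ExtendedBloch

/-- The set `Ĉ ⊆ ℂ × ℂ`: pairs `(w₀, w₁)` with `ε₀ e^{w₀} + ε₁ e^{-w₁} = 1`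
for some signs `ε₀, ε₁ ∈ {1, -1}`. -/
def CoverSet : Set (ℂ × ℂ) :=
  {w | ∃ e₀ e₁ : ℂ, (e₀ = 1 ∨ e₀ = -1) ∧ (e₁ = 1 ∨ e₁ = -1) ∧
      e₀ * Complex.exp w.1 + e₁ * Complex.exp (-w.2) = 1}

/-- `Ĉ` as a type, with the subspace topology from `ℂ × ℂ`. -/
abbrev Cover : Type := ↥CoverSet

/-- The point `(z; p, q) := (Log z + pπi, -Log (1-z) + qπi)`. -/
def ellPair (z : ℂ) (p q : ℤ) : ℂ × ℂ :=
  (Complex.log z + (p : ℂ) * (Real.pi : ℂ) * Complex.I,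
   -Complex.log (1 - z) + (q : ℂ) * (Real.pi : ℂ) * Complex.I)

lemma neg_one_zpow_cases (n : ℤ) : (-1 : ℂ) ^ n = 1 ∨ (-1 : ℂ) ^ n = -1 := by
  rcases Int.even_or_odd n with h | h
  · exact Or.inl h.neg_one_zpow
  · exact Or.inr h.neg_one_zpow

lemma exp_log_add_int (z : ℂ) (hz : z ≠ 0) (p : ℤ) :
    Complex.exp (Complex.log z + (p : ℂ) * (Real.pi : ℂ) * Complex.I) = z * (-1) ^ p := by
  rw [Complex.exp_add, Complex.exp_log hz]
  congr 1
  have h : (p : ℂ) * (Real.pi : ℂ) * Complex.I = (p : ℤ) * ((Real.pi : ℂ) * Complex.I) := by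
    ring
  rw [h, Complex.exp_int_mul, Complex.exp_pi_mul_I]

/-- `(z; p, q)` lies in `Ĉ` whenever `z ∈ ℂ ∖ {0, 1}`. -/
lemma ellPair_mem {z : ℂ} (h0 : z ≠ 0) (h1 : z ≠ 1) (p q : ℤ) :
    ellPair z p q ∈ CoverSet := by
  have h1' : (1 : ℂ) - z ≠ 0 := sub_ne_zero.mpr (Ne.symm h1)
  refine ⟨(-1 : ℂ) ^ (-p), (-1 : ℂ) ^ q, neg_one_zpow_cases _, neg_one_zpow_cases _, ?_⟩
  have e1 : Complex.exp ((ellPair z p q).1) = z * (-1) ^ p := exp_log_add_int z h0 p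
  have e2 : Complex.exp (-(ellPair z p q).2) = (1 - z) * (-1) ^ (-q) := by
    have h : -(ellPair z p q).2 =
        Complex.log (1 - z) + ((-q : ℤ) : ℂ) * (Real.pi : ℂ) * Complex.I := by
      simp only [ellPair]; push_cast; ring
    rw [h]; exact exp_log_add_int _ h1' (-q)
  rw [e1, e2]
  have hne : (-1 : ℂ) ≠ 0 := by norm_num
  have hp : (-1 : ℂ) ^ (-p) * (-1 : ℂ) ^ p = 1 := by
    rw [← zpow_add₀ hne]; simp
  have hq : (-1 : ℂ) ^ q * (-1 : ℂ) ^ (-q) = 1 := by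
    rw [← zpow_add₀ hne]; simp
  calc (-1 : ℂ) ^ (-p) * (z * (-1) ^ p) + (-1 : ℂ) ^ q * ((1 - z) * (-1) ^ (-q))
      = z * ((-1 : ℂ) ^ (-p) * (-1 : ℂ) ^ p) + (1 - z) * ((-1 : ℂ) ^ q * (-1 : ℂ) ^ (-q)) := by
        ring
    _ = 1 := by rw [hp, hq]; ring

/-- The set `FT` of five-tuples entering the five term relation. -/
def FTSet : Set (Fin 5 → ℂ) :=
  {v | ∃ x y : ℂ, (x ≠ 0 ∧ x ≠ 1) ∧ (y ≠ 0 ∧ y ≠ 1) ∧ x ≠ y ∧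
      v = ![x, y, y / x, (1 - x⁻¹) / (1 - y⁻¹), (1 - x) / (1 - y)]}

/-- `FT⁺`: tuples in `FT` all of whose coordinates lie in the upper half plane. -/
def FTPlus : Set (Fin 5 → ℂ) := {v | v ∈ FTSet ∧ ∀ i, 0 < (v i).im}

/-- The covering projection `π : Ĉ → ℂ ∖ {0,1}`; on `Ĉ` it equals `ε₀ e^{w₀}`
(note `(e^{2w₀} - e^{-2w₁} + 1)/2 = ε₀ e^{w₀}` on `Ĉ`). -/
def projC (w : ℂ × ℂ) : ℂ :=
  (Complex.exp (2 * w.1) - Complex.exp (-(2 * w.2)) + 1) / 2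

def proj5 (u : Fin 5 → Cover) : Fin 5 → ℂ := fun i => projC (u i : ℂ × ℂ)

/-- The base points `((x₀;0,0), …, (x₄;0,0))` with `(x₀,…,x₄) ∈ FT⁺`. -/
def basePts : Set (Fin 5 → Cover) :=
  {u | ∃ x ∈ FTPlus, ∀ i, (u i : ℂ × ℂ) = ellPair (x i) 0 0}

/-- `liftFT₀`: the component of the preimage of `FT` in `Ĉ⁵` containing the base points
(these all lie in a single component since `FT⁺` is connected). -/
def liftFT₀ : Set (Fin 5 → Cover) :=
  ⋃ u ∈ basePts, connectedComponentIn (proj5 ⁻¹' FTSet) u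

/-- The action of `ℤ × ℤ` on `ℂ × ℂ` by `(w₀, w₁) ↦ (w₀ + pπi, w₁ + qπi)`. -/
def shiftPair (w : ℂ × ℂ) (t : ℤ × ℤ) : ℂ × ℂ :=
  (w.1 + (t.1 : ℂ) * (Real.pi : ℂ) * Complex.I,
   w.2 + (t.2 : ℂ) * (Real.pi : ℂ) * Complex.I)

/-- The set `V ⊆ (ℤ × ℤ)⁵`. -/
def VSet : Set (Fin 5 → ℤ × ℤ) :=
  {v | ∃ p₀ p₁ q₀ q₁ q₂ : ℤ,
      v = ![(p₀, q₀), (p₁, q₁), (p₁ - p₀, q₂), (p₁ - p₀ + q₁ - q₀, q₂ - q₁),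
            (q₁ - q₀, q₂ - q₁ - p₀)]}

/-- `liftFT = liftFT₀ + V`. -/
def liftFT : Set (Fin 5 → Cover) :=
  {w | ∃ u ∈ liftFT₀, ∃ v ∈ VSet, ∀ i, (w i : ℂ × ℂ) = shiftPair (u i : ℂ × ℂ) (v i)}

/-- Relators of the lifted five term relation. -/
def fiveTermRelSet : Set (FreeAbelianGroup Cover) :=
  {a | ∃ u : Fin 5 → Cover, u ∈ liftFT ∧
      a = ∑ i : Fin 5, ((-1 : ℤ) ^ (i : ℕ)) • FreeAbelianGroup.of (u i)}

/-- Relators of the transfer relation. -/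
def transferRelSet : Set (FreeAbelianGroup Cover) :=
  {a | ∃ (z : ℂ) (h0 : z ≠ 0) (h1 : z ≠ 1) (p q p' q' : ℤ),
      a = FreeAbelianGroup.of (⟨ellPair z p q, ellPair_mem h0 h1 p q⟩ : Cover)
        + FreeAbelianGroup.of (⟨ellPair z p' q', ellPair_mem h0 h1 p' q'⟩ : Cover)
        - FreeAbelianGroup.of (⟨ellPair z p q', ellPair_mem h0 h1 p q'⟩ : Cover)
        - FreeAbelianGroup.of (⟨ellPair z p' q, ellPair_mem h0 h1 p' q⟩ : Cover)}

def epRel : AddSubgroup (FreeAbelianGroup Cover) :=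
  AddSubgroup.closure (fiveTermRelSet ∪ transferRelSet)

/-- The extended pre-Bloch group `EP(ℂ)`: the free abelian group on `Ĉ` modulo the
lifted five term relations and the transfer relations. -/
abbrev EP : Type := FreeAbelianGroup Cover ⧸ epRel

/-- The class of a point of `Ĉ` in `EP(ℂ)`. -/
def epMk (w : Cover) : EP := QuotientAddGroup.mk (FreeAbelianGroup.of w)

/-- The class `[z; p, q] ∈ EP(ℂ)` (junk value `0` if `z ∈ {0, 1}`). -/
def epGen (z : ℂ) (p q : ℤ) : EP :=
  if h : z ≠ 0 ∧ z ≠ 1 then epMk ⟨ellPair z p q, ellPair_mem h.1 h.2 p q⟩ else 0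

/-- `χ : ℂ* → EP(ℂ)`, `χ(z) = [z;0,1] - [z;0,0]` (and `χ(1) = 0`). -/
def chi (z : ℂ) : EP := epGen z 0 1 - epGen z 0 0

/-- Relation subgroup for `EP′(ℂ)` (no transfer relation). -/
def epRel' : AddSubgroup (FreeAbelianGroup Cover) := AddSubgroup.closure fiveTermRelSet

/-- `EP′(ℂ)`: the free abelian group on `Ĉ` modulo only the lifted five term relations. -/
abbrev EP' : Type := FreeAbelianGroup Cover ⧸ epRel'

def epMk' (w : Cover) : EP' := QuotientAddGroup.mk (FreeAbelianGroup.of w)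

/-- The class `[z; p, q] ∈ EP′(ℂ)` (junk value `0` if `z ∈ {0, 1}`). -/
def epGen' (z : ℂ) (p q : ℤ) : EP' :=
  if h : z ≠ 0 ∧ z ≠ 1 then epMk' ⟨ellPair z p q, ellPair_mem h.1 h.2 p q⟩ else 0

/-- The natural surjection `EP′(ℂ) → EP(ℂ)`. -/
def toEP : EP' →+ EP :=
  QuotientAddGroup.map epRel' epRel (AddMonoidHom.id _)
    (by
      rw [AddSubgroup.comap_id]
      exact AddSubgroup.closure_mono Set.subset_union_left)

/-- The element `κ(x) = [x;1,1] + [x;0,0] - [x;1,0] - [x;0,1] ∈ EP′(ℂ)`. -/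
def kappa (z : ℂ) : EP' := epGen' z 1 1 + epGen' z 0 0 - epGen' z 1 0 - epGen' z 0 1

/-! ### Auxiliary material for the proof -/

lemma prod_div_telescope (f : ℕ → ℂ) (hf : ∀ k, f k ≠ 0) (n : ℕ) :
    ∏ k ∈ Finset.range n, f (k + 1) / f k = f n / f 0 := by
  induction n with
  | zero => simp [div_self (hf 0)]
  | succ n ih =>
    rw [Finset.prod_range_succ, ih]
    rw [div_mul_div_comm, mul_comm (f 0), mul_div_mul_left _ _ (hf n)]

lemma clamp_lipschitz (s t : ℝ) : |max 0 (min 1 s) - max 0 (min 1 t)| ≤ |s - t| := by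
  calc |max 0 (min 1 s) - max 0 (min 1 t)|
      = |max (min 1 s) 0 - max (min 1 t) 0| := by rw [max_comm, max_comm (min 1 t)]
    _ ≤ |min 1 s - min 1 t| := abs_max_sub_max_le_abs _ _ _
    _ ≤ max |1 - 1| |s - t| := abs_min_sub_min_le_max 1 s 1 t
    _ = |s - t| := by simp

/-- Continuous branch of logarithm along a path that is constant outside `[0,1]`. -/
lemma exists_continuous_log {γ : ℝ → ℂ} (hγ : Continuous γ) (hne : ∀ t, γ t ≠ 0)
    (hlow : ∀ t ≤ (0 : ℝ), γ t = γ 0) (hhigh : ∀ t, (1 : ℝ) ≤ t → γ t = γ 1) :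
    ∃ L : ℝ → ℂ, Continuous L ∧ L 0 = Complex.log (γ 0) ∧ ∀ t, Complex.exp (L t) = γ t := by
  obtain ⟨t₀, ht₀, hmin⟩ := isCompact_Icc.exists_isMinOn (⟨0, by norm_num⟩ :
      (Set.Icc (0:ℝ) 1).Nonempty) (hγ.norm.continuousOn)
  set m : ℝ := ‖γ t₀‖ with hm
  have hm0 : 0 < m := norm_pos_iff.mpr (hne t₀)
  have hmb : ∀ t : ℝ, m ≤ ‖γ t‖ := by
    intro t
    rcases le_total t 0 with h | h
    · rw [hlow t h]; exact hmin (by norm_num : (0:ℝ) ∈ Set.Icc (0:ℝ) 1)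
    rcases le_total 1 t with h' | h'
    · rw [hhigh t h']; exact hmin (by norm_num : (1:ℝ) ∈ Set.Icc (0:ℝ) 1)
    · exact hmin (Set.mem_Icc.mpr ⟨h, h'⟩)
  have huc := isCompact_Icc.uniformContinuousOn_of_continuous
      (hγ.continuousOn : ContinuousOn γ (Set.Icc (0:ℝ) 1))
  rw [Metric.uniformContinuousOn_iff] at huc
  obtain ⟨δ, hδ0, hδ⟩ := huc m hm0
  have hproj : ∀ t : ℝ, γ t = γ (max 0 (min 1 t)) := by
    intro t
    rcases le_total t 0 with h | h
    · rw [hlow t h]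
      have h2 : max 0 (min 1 t) = 0 := by
        rw [max_eq_left]; exact le_trans (min_le_right _ _) h
      rw [h2]
    rcases le_total 1 t with h' | h'
    · rw [hhigh t h']
      have h2 : max 0 (min 1 t) = 1 := by
        rw [min_eq_left h', max_eq_right]; norm_num
      rw [h2]
    · have h2 : max 0 (min 1 t) = t := by
        rw [min_eq_right h', max_eq_right h]
      rw [h2]
  have hdist : ∀ s t : ℝ, dist s t < δ → dist (γ s) (γ t) < m := by
    intro s t h
    rw [hproj s, hproj t]
    have hmem : ∀ u : ℝ, max 0 (min 1 u) ∈ Set.Icc (0:ℝ) 1 := fun u =>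
      ⟨le_max_left _ _, max_le (by norm_num) (min_le_left _ _)⟩
    refine hδ _ (hmem s) _ (hmem t) ?_
    calc dist (max 0 (min 1 s)) (max 0 (min 1 t)) = |max 0 (min 1 s) - max 0 (min 1 t)| := rfl
      _ ≤ |s - t| := clamp_lipschitz s t
      _ = dist s t := rfl
      _ < δ := h
  obtain ⟨n', hn'⟩ := exists_nat_one_div_lt hδ0
  set n : ℕ := n' + 1 with hn
  have hnpos : (0:ℝ) < n := by positivity
  have hinv : (1:ℝ) / n < δ := by rw [hn]; push_cast; exact hn'
  set L : ℝ → ℂ := fun t => Complex.log (γ 0) +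
      ∑ k ∈ Finset.range n, Complex.log (γ (min t (((k:ℝ) + 1) / n)) / γ (min t ((k:ℝ) / n)))
    with hL
  have hratio : ∀ (t : ℝ) (a b : ℝ), 0 ≤ a → a ≤ b → b - a ≤ 1 / n →
      ‖γ (min t b) / γ (min t a) - 1‖ < 1 := by
    intro t a b ha hab hba
    have hd : dist (min t b) (min t a) < δ := by
      rcases le_total t a with h | h
      · rw [min_eq_left (h.trans hab), min_eq_left h]; simpa using hδ0
      · have h1 : min t a = a := min_eq_right h
        have h2 : a ≤ min t b := le_min h hab
        have h3 : min t b ≤ b := min_le_right _ _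
        rw [h1, Real.dist_eq, _root_.abs_of_nonneg (by linarith : (0:ℝ) ≤ min t b - a)]
        linarith
    have hd2 := hdist _ _ hd
    rw [dist_eq_norm] at hd2
    have hg := hmb (min t a)
    have hgn : γ (min t a) ≠ 0 := hne _
    rw [div_sub_one hgn, norm_div]
    rw [div_lt_one (hm0.trans_le hg)]
    exact lt_of_lt_of_le hd2 hg
  have hslit : ∀ (t : ℝ) (a b : ℝ), 0 ≤ a → a ≤ b → b - a ≤ 1 / n →
      γ (min t b) / γ (min t a) ∈ Complex.slitPlane := by
    intro t a b ha hab hba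
    have h := hratio t a b ha hab hba
    left
    have h1 : |(γ (min t b) / γ (min t a) - 1).re| ≤ ‖γ (min t b) / γ (min t a) - 1‖ :=
      Complex.abs_re_le_norm _
    have h2 : |(γ (min t b) / γ (min t a)).re - 1| < 1 := by
      simpa [Complex.sub_re] using lt_of_le_of_lt h1 h
    have := abs_lt.mp h2
    linarith [this.1]
  have hargs : ∀ k : ℕ, (0:ℝ) ≤ (k:ℝ)/n ∧ (k:ℝ)/n ≤ ((k:ℝ)+1)/n ∧ ((k:ℝ)+1)/n - (k:ℝ)/n ≤ 1/n := by
    intro k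
    refine ⟨by positivity, by gcongr <;> linarith, ?_⟩
    rw [div_sub_div_same]; norm_num
  refine ⟨L, ?_, ?_, ?_⟩
  · refine continuous_const.add (continuous_finset_sum _ fun k _ => ?_)
    rw [continuous_iff_continuousAt]
    intro t
    have hk := hargs k
    refine ContinuousAt.clog ?_ (hslit t _ _ hk.1 hk.2.1 hk.2.2)
    exact ((hγ.comp (continuous_id.min continuous_const)).div
      (hγ.comp (continuous_id.min continuous_const)) (fun s => hne _)).continuousAt
  · rw [hL]
    simp only []
    have hz : ∀ k : ℕ, min (0:ℝ) (((k:ℝ))/n) = 0 := fun k => min_eq_left (by positivity)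
    have hz' : ∀ k : ℕ, min (0:ℝ) (((k:ℝ)+1)/n) = 0 := fun k => min_eq_left (by positivity)
    have h : ∀ k ∈ Finset.range n,
        Complex.log (γ (min (0:ℝ) (((k:ℝ)+1)/n)) / γ (min (0:ℝ) ((k:ℝ)/n))) = 0 := by
      intro k _
      rw [hz k, hz' k, div_self (hne 0), Complex.log_one]
    rw [Finset.sum_congr rfl h]
    simp
  · intro t
    rw [hL]
    simp only []
    rw [Complex.exp_add, Complex.exp_sum, Complex.exp_log (hne 0)]
    have hterm : ∀ k ∈ Finset.range n,
        Complex.exp (Complex.log (γ (min t (((k:ℝ)+1)/n)) / γ (min t ((k:ℝ)/n))))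
          = γ (min t (((k:ℝ)+1)/n)) / γ (min t ((k:ℝ)/n)) := by
      intro k _
      exact Complex.exp_log (div_ne_zero (hne _) (hne _))
    rw [Finset.prod_congr rfl hterm]
    have htel : ∏ k ∈ Finset.range n, γ (min t (((k:ℝ)+1)/n)) / γ (min t ((k:ℝ)/n))
        = γ (min t ((n:ℝ)/n)) / γ (min t ((0:ℕ)/n : ℝ)) := by
      have h := prod_div_telescope (fun k => γ (min t ((k:ℝ)/n))) (fun k => hne _) n
      rw [← h]
      refine Finset.prod_congr rfl fun k _ => ?_
      push_cast
      ring_nf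
    rw [htel]
    have hnn : ((n:ℝ))/n = 1 := div_self (ne_of_gt hnpos)
    have h00 : (((0:ℕ):ℝ))/n = 0 := by norm_num
    rw [hnn, h00]
    rcases le_total t 0 with h | h
    · rw [min_eq_left (h.trans zero_le_one), min_eq_left h]
      rw [div_self (hne t), mul_one, ← hlow t h]
    · rw [min_eq_right h]
      rcases le_total t 1 with h' | h'
      · rw [min_eq_left h', mul_comm, div_mul_cancel₀ _ (hne 0)]
      · rw [min_eq_right h', hhigh t h', mul_comm, div_mul_cancel₀ _ (hne 0)]

/-- Lift a path avoiding `0` and `1` to the cover data. -/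
lemma exists_cover_lift {γ : ℝ → ℂ} (hc : Continuous γ) (h0 : ∀ t, γ t ≠ 0)
    (h1 : ∀ t, γ t ≠ 1) (hlow : ∀ t ≤ (0:ℝ), γ t = γ 0) (hhigh : ∀ t, (1:ℝ) ≤ t → γ t = γ 1) :
    ∃ a b : ℝ → ℂ, Continuous a ∧ Continuous b ∧
      a 0 = Complex.log (γ 0) ∧ b 0 = Complex.log (1 - γ 0) ∧
      (∀ t, Complex.exp (a t) = γ t) ∧ (∀ t, Complex.exp (b t) = 1 - γ t) := by
  obtain ⟨a, hac, ha0, hae⟩ := exists_continuous_log hc h0 hlow hhigh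
  obtain ⟨b, hbc, hb0, hbe⟩ := exists_continuous_log (γ := fun t => 1 - γ t)
    (continuous_const.sub hc) (fun t => sub_ne_zero.mpr (Ne.symm (h1 t)))
    (fun t ht => by simp [hlow t ht]) (fun t ht => by simp [hhigh t ht])
  exact ⟨a, b, hac, hbc, ha0, hb0, hae, hbe⟩

lemma im_pos_ne {w : ℂ} (h : 0 < w.im) : w ≠ 0 ∧ w ≠ 1 := by
  constructor <;> rintro rfl <;> simp at h

lemma shiftPair_ellPair (z : ℂ) (P Q : ℤ) (t : ℤ × ℤ) :
    shiftPair (ellPair z P Q) t = ellPair z (P + t.1) (Q + t.2) := by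
  unfold shiftPair ellPair
  refine Prod.ext ?_ ?_ <;> simp only [] <;> push_cast <;> ring

lemma epGen'_eq (z : ℂ) (h0 : z ≠ 0) (h1 : z ≠ 1) (p q : ℤ) :
    epGen' z p q = epMk' ⟨ellPair z p q, ellPair_mem h0 h1 p q⟩ :=
  dif_pos ⟨h0, h1⟩

lemma rel_zero {w : Fin 5 → Cover} (hw : w ∈ liftFT) :
    epMk' (w 0) - epMk' (w 1) + epMk' (w 2) - epMk' (w 3) + epMk' (w 4) = 0 := by
  have hmem : (∑ i : Fin 5, ((-1 : ℤ) ^ (i : ℕ)) • FreeAbelianGroup.of (w i)) ∈ epRel' :=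
    AddSubgroup.subset_closure ⟨w, hw, rfl⟩
  have h := (QuotientAddGroup.eq_zero_iff
      (∑ i : Fin 5, ((-1 : ℤ) ^ (i : ℕ)) • FreeAbelianGroup.of (w i))).mpr hmem
  have h2 : (QuotientAddGroup.mk' epRel') (∑ i : Fin 5, ((-1 : ℤ) ^ (i : ℕ)) •
      FreeAbelianGroup.of (w i)) = 0 := h
  rw [map_sum] at h2
  simp only [map_zsmul] at h2
  rw [Fin.sum_univ_five] at h2
  have hv : ∀ i : Fin 5, (QuotientAddGroup.mk' epRel') (FreeAbelianGroup.of (w i))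
      = epMk' (w i) := fun i => rfl
  simp only [hv] at h2
  norm_num at h2
  exact h2

set_option maxHeartbeats 2000000 in
/-- The master five term relation family available at an arbitrary `z ∈ ℂ ∖ {0,1}`. -/
lemma key_rel (z : ℂ) (hz0 : z ≠ 0) (hz1 : z ≠ 1) :
    ∃ (x₁ x₂ x₃ x₄ : ℂ), (x₁ ≠ 0 ∧ x₁ ≠ 1) ∧ (x₂ ≠ 0 ∧ x₂ ≠ 1) ∧ (x₃ ≠ 0 ∧ x₃ ≠ 1) ∧
      (x₄ ≠ 0 ∧ x₄ ≠ 1) ∧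
      ∃ c₂ d₂ c₃ d₃ c₄ d₄ : ℤ, ∀ p₀ q₀ p₁ q₁ q₂ a₂ b₂ a₃ b₃ a₄ b₄ : ℤ,
        a₂ = p₁ - p₀ + c₂ → b₂ = q₂ + d₂ →
        a₃ = p₁ - p₀ + q₁ - q₀ + c₃ → b₃ = q₂ - q₁ + d₃ →
        a₄ = q₁ - q₀ + c₄ → b₄ = q₂ - q₁ - p₀ + d₄ →
        epGen' z p₀ q₀ - epGen' x₁ p₁ q₁ + epGen' x₂ a₂ b₂ - epGen' x₃ a₃ b₃
          + epGen' x₄ a₄ b₄ = 0 := by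
  classical
  -- choose a starting configuration in `FT⁺` whose second coordinate differs from `z`
  obtain ⟨xs, ys, him0, him1, him2, him3, him4, hysz⟩ :
      ∃ xs ys : ℂ, 0 < xs.im ∧ 0 < ys.im ∧ 0 < (ys/xs).im ∧
        0 < ((1 - xs⁻¹)/(1 - ys⁻¹)).im ∧ 0 < ((1-xs)/(1-ys)).im ∧ ys ≠ z := by
    by_cases hz : z = Complex.I/2
    · refine ⟨(1+Complex.I)/4, (1+2*Complex.I)/4, ?_, ?_, ?_, ?_, ?_, ?_⟩
      · norm_num [Complex.div_im, Complex.div_re, Complex.normSq_apply]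
      · norm_num [Complex.div_im, Complex.div_re, Complex.normSq_apply]
      · norm_num [Complex.div_im, Complex.div_re, Complex.normSq_apply]
      · norm_num [Complex.div_im, Complex.div_re, Complex.normSq_apply, Complex.inv_re,
          Complex.inv_im]
      · norm_num [Complex.div_im, Complex.div_re, Complex.normSq_apply]
      · rw [hz]
        norm_num [Complex.ext_iff, Complex.div_re, Complex.div_im, Complex.normSq_apply]
    · refine ⟨(1+Complex.I)/4, Complex.I/2, ?_, ?_, ?_, ?_, ?_, fun h => hz h.symm⟩ <;>
        norm_num [Complex.div_im, Complex.div_re, Complex.normSq_apply, Complex.inv_re,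
          Complex.inv_im]
  have hxs0 : xs ≠ 0 := (im_pos_ne him0).1
  have hxs1 : xs ≠ 1 := (im_pos_ne him0).2
  have hys0 : ys ≠ 0 := (im_pos_ne him1).1
  have hys1 : ys ≠ 1 := (im_pos_ne him1).2
  have hxsys : xs ≠ ys := by
    intro h
    rw [← h, div_self hxs0] at him2
    simp at him2
  -- a path from `xs` to `z` avoiding `0`, `1`, `ys`
  set S : Set ℂ := {0, 1, ys} with hS
  have hSc : S.Countable :=
    ((Set.finite_singleton ys).insert 1 |>.insert 0).countable
  have hpc : IsPathConnected Sᶜ := by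
    refine hSc.isPathConnected_compl_of_one_lt_rank ?_
    rw [Complex.rank_real_complex]; norm_num
  have hxsS : xs ∈ Sᶜ := by
    simp only [hS, Set.mem_compl_iff, Set.mem_insert_iff, Set.mem_singleton_iff]
    push_neg
    exact ⟨hxs0, hxs1, hxsys⟩
  have hzS : z ∈ Sᶜ := by
    simp only [hS, Set.mem_compl_iff, Set.mem_insert_iff, Set.mem_singleton_iff]
    push_neg
    exact ⟨hz0, hz1, fun h => hysz h.symm⟩
  have hJ : JoinedIn Sᶜ xs z := hpc.joinedIn xs hxsS z hzS
  set P : Path xs z := hJ.somePath with hP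
  set X : ℝ → ℂ := (P.extend : ℝ → ℂ) with hXdef
  have hX0 : X 0 = xs := P.extend_zero
  have hX1 : X 1 = z := P.extend_one
  have hXc : Continuous X := P.continuous_extend
  have hXmem : ∀ t, X t ∈ Sᶜ := by
    intro t
    rw [hXdef]
    rw [show P.extend t = P (Set.projIcc 0 1 zero_le_one t) from rfl]
    exact hJ.somePath_mem _
  have hXlow : ∀ t ≤ (0:ℝ), X t = X 0 := by
    intro t ht
    rw [hXdef, P.extend_of_le_zero ht, P.extend_zero]
  have hXhigh : ∀ t, (1:ℝ) ≤ t → X t = X 1 := by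
    intro t ht
    rw [hXdef, P.extend_of_one_le ht, P.extend_one]
  have hXt0 : ∀ t, X t ≠ 0 := by
    intro t h
    have := hXmem t
    simp [hS, h] at this
  have hXt1 : ∀ t, X t ≠ 1 := by
    intro t h
    have := hXmem t
    simp [hS, h] at this
  have hXty : ∀ t, X t ≠ ys := by
    intro t h
    have := hXmem t
    simp [hS, h] at this
  -- the five coordinate paths
  set G : ℝ → Fin 5 → ℂ :=
    fun t => ![X t, ys, ys / X t, (1 - (X t)⁻¹)/(1 - ys⁻¹), (1 - X t)/(1 - ys)] with hG
  have hden3 : (1 - ys⁻¹) ≠ 0 := by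
    rw [sub_ne_zero]
    intro h
    exact hys1 (inv_eq_one.mp h.symm)
  have hden4 : (1 - ys) ≠ 0 := sub_ne_zero.mpr (Ne.symm hys1)
  have hGc : ∀ i : Fin 5, Continuous (fun t => G t i) := by
    intro i
    fin_cases i
    · exact hXc
    · exact continuous_const
    · exact continuous_const.div hXc hXt0
    · exact ((continuous_const.sub (hXc.inv₀ hXt0)).div continuous_const fun t => hden3)
    · exact ((continuous_const.sub hXc).div continuous_const fun t => hden4)
  have hG0 : ∀ (i : Fin 5) t, G t i ≠ 0 := by
    intro i t
    fin_cases i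
    · exact hXt0 t
    · exact hys0
    · exact div_ne_zero hys0 (hXt0 t)
    · refine div_ne_zero ?_ hden3
      rw [sub_ne_zero]
      intro h
      exact hXt1 t (inv_eq_one.mp h.symm)
    · exact div_ne_zero (sub_ne_zero.mpr (Ne.symm (hXt1 t))) hden4
  have hG1 : ∀ (i : Fin 5) t, G t i ≠ 1 := by
    intro i t
    fin_cases i
    · exact hXt1 t
    · exact hys1
    · show ys / X t ≠ 1
      intro h
      exact hXty t (((div_eq_one_iff_eq (hXt0 t)).mp h).symm)
    · show (1 - (X t)⁻¹) / (1 - ys⁻¹) ≠ 1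
      intro h
      have h1 := (div_eq_one_iff_eq hden3).mp h
      have h2 : (X t)⁻¹ = ys⁻¹ := by linear_combination -h1
      exact hXty t (inv_injective h2)
    · show (1 - X t) / (1 - ys) ≠ 1
      intro h
      have h1 := (div_eq_one_iff_eq hden4).mp h
      have h2 : X t = ys := by linear_combination -h1
      exact hXty t h2
  have hGlow : ∀ (i : Fin 5), ∀ t ≤ (0:ℝ), G t i = G 0 i := by
    intro i t ht
    fin_cases i
    · show X t = X 0
      rw [hXlow t ht]
    · rfl
    · show ys / X t = ys / X 0
      rw [hXlow t ht]
    · show (1 - (X t)⁻¹) / (1 - ys⁻¹) = (1 - (X 0)⁻¹) / (1 - ys⁻¹)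
      rw [hXlow t ht]
    · show (1 - X t) / (1 - ys) = (1 - X 0) / (1 - ys)
      rw [hXlow t ht]
  have hGhigh : ∀ (i : Fin 5), ∀ t, (1:ℝ) ≤ t → G t i = G 1 i := by
    intro i t ht
    fin_cases i
    · show X t = X 1
      rw [hXhigh t ht]
    · rfl
    · show ys / X t = ys / X 1
      rw [hXhigh t ht]
    · show (1 - (X t)⁻¹) / (1 - ys⁻¹) = (1 - (X 1)⁻¹) / (1 - ys⁻¹)
      rw [hXhigh t ht]
    · show (1 - X t) / (1 - ys) = (1 - X 1) / (1 - ys)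
      rw [hXhigh t ht]
  -- lift each coordinate to the cover
  have hlift : ∀ i : Fin 5, ∃ a b : ℝ → ℂ, Continuous a ∧ Continuous b ∧
      a 0 = Complex.log (G 0 i) ∧ b 0 = Complex.log (1 - G 0 i) ∧
      (∀ t, Complex.exp (a t) = G t i) ∧ (∀ t, Complex.exp (b t) = 1 - G t i) :=
    fun i => exists_cover_lift (γ := fun t => G t i) (hGc i) (hG0 i) (hG1 i) (hGlow i) (hGhigh i)
  choose A B hAc hBc hA0 hB0 hAe hBe using hlift
  -- the lifted path in `Ĉ⁵`
  have humem : ∀ (t : ℝ) (i : Fin 5), ((A i t, -(B i t)) : ℂ × ℂ) ∈ CoverSet := by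
    intro t i
    refine ⟨1, 1, Or.inl rfl, Or.inl rfl, ?_⟩
    simp only [one_mul, neg_neg]
    rw [hAe i t, hBe i t]
    ring
  set u : ℝ → Fin 5 → Cover := fun t i => ⟨(A i t, -(B i t)), humem t i⟩ with hu
  have hucont : Continuous u := by
    refine continuous_pi fun i => Continuous.subtype_mk ?_ _
    exact (hAc i).prodMk (hBc i).neg
  have hproj : ∀ t, proj5 (u t) = fun i => G t i := by
    intro t
    funext i
    show projC (A i t, -(B i t)) = G t i
    unfold projC
    simp only []
    have e1 : Complex.exp (2 * A i t) = (G t i)^2 := by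
      rw [two_mul, Complex.exp_add, hAe i t]; ring
    have e2 : Complex.exp (-(2 * -(B i t))) = (1 - G t i)^2 := by
      rw [show -(2 * -(B i t)) = 2 * B i t by ring, two_mul, Complex.exp_add, hBe i t]; ring
    rw [e1, e2]
    ring
  have hmemFT : ∀ t, (fun i => G t i) ∈ FTSet := by
    intro t
    exact ⟨X t, ys, ⟨hXt0 t, hXt1 t⟩, ⟨hys0, hys1⟩, hXty t,
      by funext i; rfl⟩
  have hupre : ∀ t, u t ∈ proj5 ⁻¹' FTSet := by
    intro t
    rw [Set.mem_preimage, hproj t]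
    exact hmemFT t
  -- `u 0` is a base point
  have hGim : ∀ i : Fin 5, 0 < (G 0 i).im := by
    intro i
    fin_cases i
    · show 0 < (X 0).im
      rw [hX0]; exact him0
    · exact him1
    · show 0 < (ys / X 0).im
      rw [hX0]; exact him2
    · show 0 < ((1 - (X 0)⁻¹) / (1 - ys⁻¹)).im
      rw [hX0]; exact him3
    · show 0 < ((1 - X 0) / (1 - ys)).im
      rw [hX0]; exact him4
  have hbase : u 0 ∈ basePts := by
    refine ⟨fun i => G 0 i, ⟨hmemFT 0, hGim⟩, fun i => ?_⟩
    show ((A i 0, -(B i 0)) : ℂ × ℂ) = ellPair (G 0 i) 0 0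
    unfold ellPair
    refine Prod.ext ?_ ?_ <;> simp only []
    · rw [hA0 i]; push_cast; ring
    · rw [hB0 i]; push_cast; ring
  -- `u 1` lies in `liftFT₀`
  have hu1 : u 1 ∈ liftFT₀ := by
    have hJ5 : JoinedIn (proj5 ⁻¹' FTSet) (u 0) (u 1) :=
      JoinedIn.ofLine hucont.continuousOn rfl rfl (by
        rintro p ⟨t, _, rfl⟩
        exact hupre t)
    refine Set.mem_biUnion hbase ?_
    rw [connectedComponentIn_eq_image (hupre 0)]
    exact ⟨⟨u 1, hJ5.target_mem⟩, pathComponent_subset_component _ hJ5.joined_subtype, rfl⟩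
  -- identify the endpoint lifts
  have hend : ∀ i : Fin 5, ∃ k l : ℤ, (u 1 i : ℂ × ℂ) = ellPair (G 1 i) k l := by
    intro i
    have e1 : Complex.exp (A i 1) = Complex.exp (Complex.log (G 1 i)) := by
      rw [hAe i 1, Complex.exp_log (hG0 i 1)]
    have e2 : Complex.exp (B i 1) = Complex.exp (Complex.log (1 - G 1 i)) := by
      rw [hBe i 1, Complex.exp_log (sub_ne_zero.mpr (Ne.symm (hG1 i 1)))]
    obtain ⟨n1, hn1⟩ := Complex.exp_eq_exp_iff_exists_int.mp e1
    obtain ⟨n2, hn2⟩ := Complex.exp_eq_exp_iff_exists_int.mp e2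
    refine ⟨2*n1, -(2*n2), ?_⟩
    show ((A i 1, -(B i 1)) : ℂ × ℂ) = ellPair (G 1 i) (2*n1) (-(2*n2))
    unfold ellPair
    refine Prod.ext ?_ ?_ <;> simp only []
    · rw [hn1]; push_cast; ring
    · rw [hn2]; push_cast; ring
  choose K L hKL using hend
  -- produce the family of relations
  refine ⟨G 1 1, G 1 2, G 1 3, G 1 4, ⟨hG0 1 1, hG1 1 1⟩, ⟨hG0 2 1, hG1 2 1⟩,
    ⟨hG0 3 1, hG1 3 1⟩, ⟨hG0 4 1, hG1 4 1⟩,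
    K 2 - K 1 + K 0, 0, K 3 - K 1 + K 0 - L 1 + L 0, L 3 - L 2 + L 1,
    K 4 - L 1 + L 0, L 4 - L 2 + L 1 + K 0, ?_⟩
  intro p₀ q₀ p₁ q₁ q₂ a₂ b₂ a₃ b₃ a₄ b₄ ha₂ hb₂ ha₃ hb₃ ha₄ hb₄
  set v : Fin 5 → ℤ × ℤ :=
    ![(p₀ - K 0, q₀ - L 0), (p₁ - K 1, q₁ - L 1),
      ((p₁ - K 1) - (p₀ - K 0), q₂ - L 2),
      ((p₁ - K 1) - (p₀ - K 0) + (q₁ - L 1) - (q₀ - L 0), (q₂ - L 2) - (q₁ - L 1)),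
      ((q₁ - L 1) - (q₀ - L 0), (q₂ - L 2) - (q₁ - L 1) - (p₀ - K 0))] with hv
  have hvV : v ∈ VSet := ⟨p₀ - K 0, p₁ - K 1, q₀ - L 0, q₁ - L 1, q₂ - L 2, rfl⟩
  set w : Fin 5 → Cover := fun i =>
    ⟨ellPair (G 1 i) (K i + (v i).1) (L i + (v i).2),
      ellPair_mem (hG0 i 1) (hG1 i 1) _ _⟩ with hw
  have hwl : w ∈ liftFT := by
    refine ⟨u 1, hu1, v, hvV, fun i => ?_⟩
    show ellPair (G 1 i) (K i + (v i).1) (L i + (v i).2) = shiftPair ((u 1 i : ℂ × ℂ)) (v i)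
    rw [hKL i, shiftPair_ellPair]
  have hrel := rel_zero hwl
  have hmk : ∀ i : Fin 5, epMk' (w i) = epGen' (G 1 i) (K i + (v i).1) (L i + (v i).2) :=
    fun i => (epGen'_eq _ (hG0 i 1) (hG1 i 1) _ _).symm
  rw [hmk 0, hmk 1, hmk 2, hmk 3, hmk 4] at hrel
  have hz' : G 1 0 = z := hX1
  rw [hz'] at hrel
  have hv0 : v 0 = (p₀ - K 0, q₀ - L 0) := rfl
  have hv1 : v 1 = (p₁ - K 1, q₁ - L 1) := rfl
  have hv2 : v 2 = ((p₁ - K 1) - (p₀ - K 0), q₂ - L 2) := rfl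
  have hv3 : v 3 = ((p₁ - K 1) - (p₀ - K 0) + (q₁ - L 1) - (q₀ - L 0),
      (q₂ - L 2) - (q₁ - L 1)) := rfl
  have hv4 : v 4 = ((q₁ - L 1) - (q₀ - L 0), (q₂ - L 2) - (q₁ - L 1) - (p₀ - K 0)) := rfl
  rw [hv0, hv1, hv2, hv3, hv4] at hrel
  simp only [] at hrel
  rw [show K 0 + (p₀ - K 0) = p₀ by ring, show L 0 + (q₀ - L 0) = q₀ by ring,
    show K 1 + (p₁ - K 1) = p₁ by ring, show L 1 + (q₁ - L 1) = q₁ by ring,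
    show K 2 + ((p₁ - K 1) - (p₀ - K 0)) = a₂ by omega,
    show L 2 + (q₂ - L 2) = b₂ by omega,
    show K 3 + ((p₁ - K 1) - (p₀ - K 0) + (q₁ - L 1) - (q₀ - L 0)) = a₃ by omega,
    show L 3 + ((q₂ - L 2) - (q₁ - L 1)) = b₃ by omega,
    show K 4 + ((q₁ - L 1) - (q₀ - L 0)) = a₄ by omega,
    show L 4 + ((q₂ - L 2) - (q₁ - L 1) - (p₀ - K 0)) = b₄ by omega] at hrel
  exact hrel

lemma combine4 {M : Type*} [AddCommGroup M] {g1 g2 g3 g4 A B C D : M}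
    (h1 : g1 = 0) (h2 : g2 = 0) (h3 : g3 = 0) (h4 : g4 = 0)
    (hc : g1 - g2 - g3 + g4 = A - B - C + D) : A - B = C - D := by
  rw [h1, h2, h3, h4] at hc
  have h0 : A - B - (C - D) = 0 := by
    rw [show A - B - (C - D) = A - B - C + D by abel, ← hc]
    abel
  exact sub_eq_zero.mp h0

lemma combine5 {M : Type*} [AddCommGroup M] {g1 g2 g3 g4 E F A B C D : M}
    (h1 : g1 = 0) (h2 : g2 = 0) (h3 : g3 = 0) (h4 : g4 = 0) (h5 : E = F)
    (hc : g1 - g2 - g3 + g4 + (E - F) = A - B - C + D) : A - B = C - D := by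
  rw [h1, h2, h3, h4, h5] at hc
  have h0 : A - B - (C - D) = 0 := by
    rw [show A - B - (C - D) = A - B - C + D by abel, ← hc]
    abel
  exact sub_eq_zero.mp h0

lemma rel1 (z : ℂ) (hz0 : z ≠ 0) (hz1 : z ≠ 1) (p q q' r r' : ℤ)
    (hr : r = q - 1) (hr' : r' = q' - 1) :
    epGen' z p q - epGen' z p q' = epGen' z p r - epGen' z p r' := by
  obtain ⟨x₁, x₂, x₃, x₄, hx1, hx2, hx3, hx4, c₂, d₂, c₃, d₃, c₄, d₄, key⟩ := key_rel z hz0 hz1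
  have h1 := key p q 0 0 0 (0-p+c₂) (0+d₂) (0-p+0-q+c₃) (0-0+d₃) (0-q+c₄) (0-0-p+d₄)
    (by omega) (by omega) (by omega) (by omega) (by omega) (by omega)
  have h2 := key p q' 0 (q'-q) (q'-q) (0-p+c₂) ((q'-q)+d₂) (0-p+0-q+c₃) (0-0+d₃)
    (0-q+c₄) (0-0-p+d₄)
    (by omega) (by omega) (by omega) (by omega) (by omega) (by omega)
  have h3 := key p r 0 0 0 (0-p+c₂) (0+d₂) (0-p+0-q+c₃+1) (0-0+d₃) (0-q+c₄+1) (0-0-p+d₄)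
    (by omega) (by omega) (by omega) (by omega) (by omega) (by omega)
  have h4 := key p r' 0 (q'-q) (q'-q) (0-p+c₂) ((q'-q)+d₂) (0-p+0-q+c₃+1) (0-0+d₃)
    (0-q+c₄+1) (0-0-p+d₄)
    (by omega) (by omega) (by omega) (by omega) (by omega) (by omega)
  exact combine4 h1 h2 h3 h4 (by abel)

lemma rel2 (z : ℂ) (hz0 : z ≠ 0) (hz1 : z ≠ 1) (p q p' r r' : ℤ)
    (hr : r = p - 1) (hr' : r' = p' - 1) :
    epGen' z p q - epGen' z p' q = epGen' z r q - epGen' z r' q := by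
  obtain ⟨x₁, x₂, x₃, x₄, hx1, hx2, hx3, hx4, c₂, d₂, c₃, d₃, c₄, d₄, key⟩ := key_rel z hz0 hz1
  have h1 := key p q 0 0 0 (0-p+c₂) (0+d₂) (0-p+0-q+c₃) (0-0+d₃) (0-q+c₄) (0-0-p+d₄)
    (by omega) (by omega) (by omega) (by omega) (by omega) (by omega)
  have h2 := key r q 0 0 0 (0-p+c₂+1) (0+d₂) (0-p+0-q+c₃+1) (0-0+d₃) (0-q+c₄) (0-0-p+d₄+1)
    (by omega) (by omega) (by omega) (by omega) (by omega) (by omega)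
  have h3 := key p' q (p'-p) 0 0 (0-p+c₂) (0+d₂) (0-p+0-q+c₃) (0-0+d₃) (0-q+c₄) (0-0-p'+d₄)
    (by omega) (by omega) (by omega) (by omega) (by omega) (by omega)
  have h4 := key r' q (p'-p) 0 0 (0-p+c₂+1) (0+d₂) (0-p+0-q+c₃+1) (0-0+d₃) (0-q+c₄)
    (0-0-p'+d₄+1)
    (by omega) (by omega) (by omega) (by omega) (by omega) (by omega)
  have h5 := rel1 x₄ hx4.1 hx4.2 (0-q+c₄) (0-0-p+d₄+1) (0-0-p'+d₄+1) (0-0-p+d₄) (0-0-p'+d₄)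
    (by omega) (by omega)
  exact combine5 h1 h2 h3 h4 h5 (by abel)

lemma rel3 (z : ℂ) (hz0 : z ≠ 0) (hz1 : z ≠ 1) (p q s a b a' b' a'' b'' : ℤ)
    (ha : a = p + s) (hb : b = q - s) (ha' : a' = p + 1) (hb' : b' = q - 1)
    (ha'' : a'' = p + s + 1) (hb'' : b'' = q - s - 1) :
    epGen' z p q - epGen' z a b = epGen' z a' b' - epGen' z a'' b'' := by
  obtain ⟨x₁, x₂, x₃, x₄, hx1, hx2, hx3, hx4, c₂, d₂, c₃, d₃, c₄, d₄, key⟩ := key_rel z hz0 hz1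
  have h1 := key p q 0 0 0 (0-p+c₂) (0+d₂) (0-p+0-q+c₃) (0-0+d₃) (0-q+c₄) (0-0-p+d₄)
    (by omega) (by omega) (by omega) (by omega) (by omega) (by omega)
  have h2 := key a b s (-s) 0 (0-p+c₂) (0+d₂) (0-p+0-q+c₃) (0-0+d₃+s) (0-q+c₄) (0-0-p+d₄)
    (by omega) (by omega) (by omega) (by omega) (by omega) (by omega)
  have h3 := key a' b' 0 0 0 (0-p+c₂-1) (0+d₂) (0-p+0-q+c₃) (0-0+d₃) (0-q+c₄+1) (0-0-p+d₄-1)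
    (by omega) (by omega) (by omega) (by omega) (by omega) (by omega)
  have h4 := key a'' b'' s (-s) 0 (0-p+c₂-1) (0+d₂) (0-p+0-q+c₃) (0-0+d₃+s) (0-q+c₄+1)
    (0-0-p+d₄-1)
    (by omega) (by omega) (by omega) (by omega) (by omega) (by omega)
  exact combine4 h1 h2 h3 h4 (by abel)
/-- Three families of relations in `EP′(ℂ)`. -/
theorem epGen'_shift_relations (z : ℂ) (h0 : z ≠ 0) (h1 : z ≠ 1) (p q p' q' s : ℤ) :
    (epGen' z p q - epGen' z p q' = epGen' z p (q - 1) - epGen' z p (q' - 1)) ∧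
    (epGen' z p q - epGen' z p' q = epGen' z (p - 1) q - epGen' z (p' - 1) q) ∧
    (epGen' z p q - epGen' z (p + s) (q - s)
      = epGen' z (p + 1) (q - 1) - epGen' z (p + s + 1) (q - s - 1)) :=
  ⟨rel1 z h0 h1 p q q' (q-1) (q'-1) rfl rfl,
   rel2 z h0 h1 p q p' (p-1) (p'-1) rfl rfl,
   rel3 z h0 h1 p q s (p+s) (q-s) (p+1) (q-1) (p+s+1) (q-s-1) rfl rfl rfl rfl rfl rfl⟩

end ExtendedBloch
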